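/- Fix real numbers λ_1 < λ_2 < ⋯ < λ_n. The Lebesgue volume of the Gelfand–Tsetlin polytope with top row λ, namely the set of triangular arrays (x^k_i)_{1 ≤ i ≤ k ≤ n} with x^n = λ and x^{k−1}_{i−1} ≤ x^k_i ≤ x^{k−1}_i for all applicable indices (viewed as a subset of ℝ^{n(n−1)/2} via the entries below the top row), equals Δ(λ) / (1!·2!·⋯·(n−1)!). -/

import Mathlib

open MeasureTheory

/-- The entry in row `r` (0-indexed; row `r` has `r+1` entries), position `i`, of the
triangular array whose top row (row `n-1`) is `lam` and whose lower rows are given by `x`. -/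
noncomputable def entry (n : ℕ) (lam : Fin n → ℝ)
    (x : ((k : Fin (n - 1)) × Fin (k.val + 1)) → ℝ) (r i : ℕ) : ℝ :=
  if h : r < n - 1 then
    (if h2 : i < r + 1 then x ⟨⟨r, h⟩, ⟨i, h2⟩⟩ else 0)
  else if h3 : i < n then lam ⟨i, h3⟩ else 0

/-- The Vandermonde product `∏_{i<j} (v j - v i)`. -/
noncomputable def vprod (N : ℕ) (v : Fin N → ℝ) : ℝ :=
  ∏ i : Fin N, ∏ j ∈ Finset.Ioi i, (v j - v i)


lemma fact_prod (N : ℕ) :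
    ∏ j ∈ Finset.range (N + 1), (if j = 0 then (1 : ℝ) else (j : ℝ)) = Nat.factorial N := by
  induction N with
  | zero => simp
  | succ n ih =>
      rw [Finset.prod_range_succ, ih]
      simp [Nat.factorial_succ]
      ring

lemma detP (N : ℕ) (lam : Fin (N + 1) → ℝ) :
    Matrix.det (Matrix.of fun i j : Fin N =>
      (lam i.succ ^ ((j : ℕ) + 1) - lam i.castSucc ^ ((j : ℕ) + 1)) / ((j : ℕ) + 1))
    = vprod (N + 1) lam / Nat.factorial N := by
  classical
  set d : Fin (N + 1) → ℝ := fun j => if (j : ℕ) = 0 then (1 : ℝ) else (j : ℕ) with hd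
  have hdprod : ∏ j : Fin (N + 1), d j = Nat.factorial N := by
    rw [Fin.prod_univ_eq_prod_range (fun j => if j = 0 then (1:ℝ) else (j:ℝ))]
    · exact fact_prod N
  set Q : Matrix (Fin (N + 1)) (Fin (N + 1)) ℝ :=
    Matrix.of fun i j => lam i ^ (j : ℕ) / d j with hQ
  -- det Q = vprod / N!
  have hQdet : Q.det = vprod (N + 1) lam / Nat.factorial N := by
    have : Q = Matrix.vandermonde lam * Matrix.diagonal fun j => (d j)⁻¹ := by
      ext i j
      simp [hQ, Matrix.mul_diagonal, Matrix.vandermonde, div_eq_mul_inv]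
    rw [this, Matrix.det_mul, Matrix.det_diagonal, Matrix.det_vandermonde]
    rw [show (∏ i : Fin (N+1), (d i)⁻¹) = (∏ i : Fin (N+1), d i)⁻¹ from
      (Finset.prod_inv_distrib _), hdprod]
    rw [div_eq_mul_inv]
    rfl
  -- row-reduce Q
  set R : Matrix (Fin (N + 1)) (Fin (N + 1)) ℝ :=
    Matrix.of (Fin.cases (Q 0) (fun i => Q i.succ - Q i.castSucc)) with hR
  have hQR : Q.det = R.det := by
    apply Matrix.det_eq_of_forall_row_eq_smul_add_pred (fun _ => 1)
    · intro j; simp [hR]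
    · intro i j
      simp [hR, Pi.sub_apply]
  -- column 0 of R is e₀
  have hR00 : R 0 0 = 1 := by simp [hR, hQ, hd]
  have hRs0 : ∀ i : Fin N, R i.succ 0 = 0 := by
    intro i; simp [hR, hQ, hd, Pi.sub_apply]
  have hRdet : R.det = Matrix.det (R.submatrix Fin.succ Fin.succ) := by
    rw [Matrix.det_succ_column_zero, Fin.sum_univ_succ]
    simp [hR00, hRs0, Fin.succAbove_zero]
  have hsub : R.submatrix Fin.succ Fin.succ = Matrix.of fun i j : Fin N =>
      (lam i.succ ^ ((j : ℕ) + 1) - lam i.castSucc ^ ((j : ℕ) + 1)) / ((j : ℕ) + 1) := by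
    ext i j
    simp [hR, hQ, hd, Pi.sub_apply, div_sub_div_same]
  rw [← hsub, ← hRdet, ← hQR, hQdet]


lemma box_monomial (N : ℕ) (lam : Fin (N + 1) → ℝ) (hl : Monotone lam) (k : Fin N → ℕ) :
    ∫ μ in Set.pi Set.univ (fun j : Fin N => Set.Icc (lam j.castSucc) (lam j.succ)),
      ∏ i : Fin N, μ i ^ k i
    = ∏ i : Fin N, (lam i.succ ^ (k i + 1) - lam i.castSucc ^ (k i + 1)) / ((k i : ℝ) + 1) := by
  have hbox : MeasurableSet (Set.pi Set.univ
      (fun j : Fin N => Set.Icc (lam j.castSucc) (lam j.succ))) :=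
    MeasurableSet.univ_pi fun j => measurableSet_Icc
  rw [← integral_indicator hbox]
  have h1 : (Set.indicator (Set.pi Set.univ
      (fun j : Fin N => Set.Icc (lam j.castSucc) (lam j.succ)))
        (fun μ : Fin N → ℝ => ∏ i : Fin N, μ i ^ k i))
      = fun μ : Fin N → ℝ => ∏ i : Fin N,
          (Set.Icc (lam i.castSucc) (lam i.succ)).indicator (fun t => t ^ k i) (μ i) := by
    funext μ
    by_cases hμ : μ ∈ Set.pi Set.univ (fun j : Fin N => Set.Icc (lam j.castSucc) (lam j.succ))
    · rw [Set.indicator_of_mem hμ]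
      exact Finset.prod_congr rfl fun i _ =>
        (Set.indicator_of_mem (hμ i (Set.mem_univ i)) _).symm
    · rw [Set.indicator_of_notMem hμ]
      rw [Set.mem_univ_pi] at hμ
      push_neg at hμ
      obtain ⟨i, hi⟩ := hμ
      exact (Finset.prod_eq_zero (Finset.mem_univ i)
        (Set.indicator_of_notMem hi _)).symm
  rw [h1, volume_pi, MeasureTheory.integral_fintype_prod_eq_prod (ι := Fin N)
    (fun i t => (Set.Icc (lam i.castSucc) (lam i.succ)).indicator (fun s => s ^ k i) t)]
  refine Finset.prod_congr rfl fun i _ => ?_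
  rw [integral_indicator measurableSet_Icc, integral_Icc_eq_integral_Ioc,
    ← intervalIntegral.integral_of_le (hl (Fin.castSucc_le_succ i)), integral_pow]



lemma vprod_expand (N : ℕ) (μ : Fin N → ℝ) :
    vprod N μ = ∑ σ : Equiv.Perm (Fin N),
      ((Equiv.Perm.sign σ : ℤ) : ℝ) * ∏ i : Fin N, μ i ^ ((σ i : ℕ)) := by
  rw [vprod, ← Matrix.det_vandermonde, ← Matrix.det_transpose, Matrix.det_apply]
  refine Finset.sum_congr rfl fun σ _ => ?_
  simp [Matrix.vandermonde, Units.smul_def, zsmul_eq_mul]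

lemma box_integral (N : ℕ) (lam : Fin (N + 1) → ℝ) (hl : Monotone lam) :
    ∫ μ in Set.pi Set.univ (fun j : Fin N => Set.Icc (lam j.castSucc) (lam j.succ)),
      vprod N μ
    = vprod (N + 1) lam / Nat.factorial N := by
  classical
  set box := Set.pi Set.univ (fun j : Fin N => Set.Icc (lam j.castSucc) (lam j.succ)) with hbox
  have hint : ∀ (c : ℝ) (k : Fin N → ℕ),
      IntegrableOn (fun μ : Fin N → ℝ => c * ∏ i : Fin N, μ i ^ k i) box := by
    intro c k
    apply ContinuousOn.integrableOn_compact (isCompact_univ_pi fun i => isCompact_Icc)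
    exact (continuous_const.mul
      (continuous_finset_prod _ fun i _ => (continuous_apply i).pow _)).continuousOn
  simp only [vprod_expand N]
  rw [integral_finset_sum _ (fun σ _ => hint _ _)]
  have hterm : ∀ σ : Equiv.Perm (Fin N),
      ∫ μ in box, ((Equiv.Perm.sign σ : ℤ) : ℝ) * ∏ i : Fin N, μ i ^ ((σ i : ℕ))
      = ((Equiv.Perm.sign σ : ℤ) : ℝ) * ∏ i : Fin N,
          (lam i.succ ^ ((σ i : ℕ) + 1) - lam i.castSucc ^ ((σ i : ℕ) + 1)) / (((σ i : ℕ) : ℝ) + 1) := by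
    intro σ
    rw [MeasureTheory.integral_const_mul, box_monomial N lam hl (fun i => (σ i : ℕ))]
  rw [Finset.sum_congr rfl (fun σ _ => hterm σ), ← detP N lam, ← Matrix.det_transpose,
    Matrix.det_apply]
  refine Finset.sum_congr rfl fun σ _ => ?_
  simp [Units.smul_def, zsmul_eq_mul]


lemma entry_small (n : ℕ) (lam : Fin n → ℝ) (x : ((k : Fin (n - 1)) × Fin (k.val + 1)) → ℝ)
    (r i : ℕ) (hr : r < n - 1) (hi : i < r + 1) :
    entry n lam x r i = x ⟨⟨r, hr⟩, ⟨i, hi⟩⟩ := by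
  simp only [entry]; rw [dif_pos hr, dif_pos hi]

lemma entry_big (n : ℕ) (lam : Fin n → ℝ) (x : ((k : Fin (n - 1)) × Fin (k.val + 1)) → ℝ)
    (r i : ℕ) (hr : ¬ r < n - 1) (hi : i < n) :
    entry n lam x r i = lam ⟨i, hi⟩ := by
  simp only [entry]; rw [dif_neg hr, dif_pos hi]

/-- the top lower row of a triangular array -/
def topRow (m : ℕ) (x : ((k : Fin (m + 1)) × Fin (k.val + 1)) → ℝ) : Fin (m + 1) → ℝ :=
  fun j => x ⟨⟨m, Nat.lt_succ_self m⟩, ⟨j.val, j.isLt⟩⟩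

/-- the remaining lower rows of a triangular array -/
def lowRows (m : ℕ) (x : ((k : Fin (m + 1)) × Fin (k.val + 1)) → ℝ) :
    ((k : Fin m) × Fin (k.val + 1)) → ℝ :=
  fun s => x ⟨⟨s.1.val, Nat.lt_succ_of_lt s.1.isLt⟩, ⟨s.2.val, s.2.isLt⟩⟩

lemma bridge (m : ℕ) (lam : Fin (m + 2) → ℝ) (x : ((k : Fin (m + 1)) × Fin (k.val + 1)) → ℝ)
    (r i : ℕ) (hr : r < m + 1) (hi : i < r + 1) :
    entry (m + 1) (topRow m x) (lowRows m x) r i = entry (m + 1 + 1) lam x r i := by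
  rcases Nat.lt_or_ge r m with h | h
  · rw [entry_small (m + 1) _ _ r i h hi, entry_small (m + 2) _ _ r i hr hi]
    rfl
  · have hrm : m = r := by omega
    subst hrm
    rw [entry_big (m + 1) _ _ m i (by omega) (by omega), entry_small (m + 2) _ _ m i hr hi]
    rfl

lemma mono_of_box {m : ℕ} {lam : Fin (m + 2) → ℝ} (hl : Monotone lam) {μ : Fin (m + 1) → ℝ}
    (hμ : ∀ j, μ j ∈ Set.Icc (lam j.castSucc) (lam j.succ)) : Monotone μ := by
  intro a b hab
  rcases eq_or_lt_of_le hab with h | h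
  · exact le_of_eq (congrArg μ h)
  · calc μ a ≤ lam a.succ := (hμ a).2
      _ ≤ lam b.castSucc := by
          apply hl
          rw [Fin.le_def]
          have : (a : ℕ) < (b : ℕ) := h
          simp only [Fin.val_succ, Fin.coe_castSucc]
          omega
      _ ≤ μ b := (hμ b).1

/-- The Gelfand-Tsetlin polytope as a set of lower-triangular arrays. -/
def GT (m : ℕ) (lam : Fin (m + 1) → ℝ) : Set (((k : Fin m) × Fin (k.val + 1)) → ℝ) :=
  {x | ∀ r i : ℕ, r + 1 < m + 1 → i ≤ r →
    entry (m + 1) lam x (r + 1) i ≤ entry (m + 1) lam x r i ∧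
    entry (m + 1) lam x r i ≤ entry (m + 1) lam x (r + 1) (i + 1)}

lemma vprod_nonneg {N : ℕ} {v : Fin N → ℝ} (hv : Monotone v) : 0 ≤ vprod N v :=
  Finset.prod_nonneg fun i _ => Finset.prod_nonneg fun j hj =>
    sub_nonneg.2 (hv (le_of_lt (Finset.mem_Ioi.1 hj)))

lemma continuous_vprod (N : ℕ) : Continuous fun v : Fin N → ℝ => vprod N v :=
  continuous_finset_prod _ fun i _ => continuous_finset_prod _ fun j _ =>
    (continuous_apply j).sub (continuous_apply i)

lemma sig_ext {M : ℕ} {k k' : Fin M} {i : Fin (k.val + 1)} {i' : Fin (k'.val + 1)}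
    (h : k.val = k'.val) (h2 : i.val = i'.val) :
    (⟨k, i⟩ : (k : Fin M) × Fin (k.val + 1)) = ⟨k', i'⟩ := by
  obtain ⟨kv, hkv⟩ := k
  obtain ⟨kv', hkv'⟩ := k'
  simp only at h
  subst h
  obtain ⟨iv, hiv⟩ := i
  obtain ⟨iv', hiv'⟩ := i'
  simp only at h2
  subst h2
  rfl

/-- reindexing equivalence: top lower row plus the rest -/
def eqv (m : ℕ) : (Fin (m + 1) ⊕ ((k : Fin m) × Fin (k.val + 1))) ≃
    ((k : Fin (m + 1)) × Fin (k.val + 1)) where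
  toFun := fun a => match a with
    | .inl j => ⟨⟨m, Nat.lt_succ_self m⟩, ⟨j.val, j.isLt⟩⟩
    | .inr ⟨k, i⟩ => ⟨⟨k.val, Nat.lt_succ_of_lt k.isLt⟩, ⟨i.val, i.isLt⟩⟩
  invFun := fun s =>
    if h : s.1.val < m then .inr ⟨⟨s.1.val, h⟩, ⟨s.2.val, s.2.isLt⟩⟩
    else .inl ⟨s.2.val, by have h2 := s.2.isLt; omega⟩
  left_inv := by
    rintro (j | ⟨k, i⟩)
    · simp
    · simp [k.isLt]
  right_inv := by
    rintro ⟨k, i⟩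
    by_cases h : k.val < m
    · simp [h]
    · have hk : k.val = m := by omega
      simp only [dif_neg h]
      refine sig_ext ?_ rfl
      simp only [Fin.val_mk]
      omega

theorem GT_vol (m : ℕ) (lam : Fin (m + 1) → ℝ) (hl : Monotone lam) :
    volume (GT m lam) = ENNReal.ofReal (vprod (m + 1) lam /
      ∏ k ∈ Finset.range (m + 1), (Nat.factorial k : ℝ)) := by
  induction m with
  | zero =>
      have h1 : GT 0 lam = Set.univ := by
        ext x; simp only [GT, Set.mem_setOf_eq, Set.mem_univ, iff_true]
        intro r i hr hi; omega
      rw [h1, volume_pi, Measure.pi_univ]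
      simp [vprod]
  | succ m IH =>
      classical
      -- notation
      set box : Set (Fin (m + 1) → ℝ) :=
        Set.pi Set.univ (fun j : Fin (m + 1) => Set.Icc (lam j.castSucc) (lam j.succ)) with hboxdef
      have hboxM : MeasurableSet box :=
        MeasurableSet.univ_pi fun j => measurableSet_Icc
      set A : Set ((Fin (m + 1) → ℝ) × (((k : Fin m) × Fin (k.val + 1)) → ℝ)) :=
        {p | p.1 ∈ box ∧ p.2 ∈ GT m p.1} with hAdef
      set Φ : (((k : Fin (m + 1)) × Fin (k.val + 1)) → ℝ) ≃ᵐ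
          ((Fin (m + 1) → ℝ) × (((k : Fin m) × Fin (k.val + 1)) → ℝ)) :=
        (MeasurableEquiv.piCongrLeft (fun _ => ℝ) (eqv m)).symm.trans
          (MeasurableEquiv.sumPiEquivProdPi (fun _ => ℝ)) with hΦdef
      have hΦmp : MeasurePreserving Φ volume volume :=
        (volume_measurePreserving_sumPiEquivProdPi (fun _ => ℝ)).comp
          ((MeasureTheory.volume_measurePreserving_piCongrLeft (fun _ => ℝ) (eqv m)).symm
            (MeasurableEquiv.piCongrLeft (fun _ => ℝ) (eqv m)))
      have hΦ : ∀ x, Φ x = (topRow m x, lowRows m x) := fun x => rfl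
      have hent : ∀ r i : ℕ, Measurable fun p :
          (Fin (m + 1) → ℝ) × (((k : Fin m) × Fin (k.val + 1)) → ℝ) =>
            entry (m + 1) p.1 p.2 r i := by
        intro r i
        by_cases h : r < m
        · by_cases h2 : i < r + 1
          · have heq : (fun p : (Fin (m + 1) → ℝ) × (((k : Fin m) × Fin (k.val + 1)) → ℝ) =>
                entry (m + 1) p.1 p.2 r i) = fun p => p.2 ⟨⟨r, h⟩, ⟨i, h2⟩⟩ :=
              funext fun p => entry_small (m + 1) _ _ r i h h2
            rw [heq]; exact (measurable_pi_apply _).comp measurable_snd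
          · have heq : (fun p : (Fin (m + 1) → ℝ) × (((k : Fin m) × Fin (k.val + 1)) → ℝ) =>
                entry (m + 1) p.1 p.2 r i) = fun _ => (0 : ℝ) := funext fun p => by
              simp only [entry]; rw [dif_pos (show r < m + 1 - 1 from h), dif_neg h2]
            rw [heq]; exact measurable_const
        · by_cases h3 : i < m + 1
          · have heq : (fun p : (Fin (m + 1) → ℝ) × (((k : Fin m) × Fin (k.val + 1)) → ℝ) =>
                entry (m + 1) p.1 p.2 r i) = fun p => p.1 ⟨i, h3⟩ :=
              funext fun p => entry_big (m + 1) _ _ r i (by omega) h3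
            rw [heq]; exact (measurable_pi_apply _).comp measurable_fst
          · have heq : (fun p : (Fin (m + 1) → ℝ) × (((k : Fin m) × Fin (k.val + 1)) → ℝ) =>
                entry (m + 1) p.1 p.2 r i) = fun _ => (0 : ℝ) := funext fun p => by
              simp only [entry]
              rw [dif_neg (show ¬ r < m + 1 - 1 by omega), dif_neg h3]
            rw [heq]; exact measurable_const
      have hAmeas : MeasurableSet A := by
        have hA2 : A = {p : (Fin (m + 1) → ℝ) × (((k : Fin m) × Fin (k.val + 1)) → ℝ) |
            p.1 ∈ box} ∩ ⋂ (r : ℕ), ⋂ (i : ℕ),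
            {p : (Fin (m + 1) → ℝ) × (((k : Fin m) × Fin (k.val + 1)) → ℝ) |
              r + 1 < m + 1 → i ≤ r →
              (entry (m + 1) p.1 p.2 (r + 1) i ≤ entry (m + 1) p.1 p.2 r i ∧
               entry (m + 1) p.1 p.2 r i ≤ entry (m + 1) p.1 p.2 (r + 1) (i + 1))} := by
          ext p
          simp only [hAdef, GT, Set.mem_setOf_eq, Set.mem_inter_iff, Set.mem_iInter]
        rw [hA2]
        refine (measurable_fst hboxM).inter
          (MeasurableSet.iInter fun r => MeasurableSet.iInter fun i => ?_)
        rcases Classical.em (r + 1 < m + 1 ∧ i ≤ r) with ⟨h1, h2⟩ | h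
        · have heq : {p : (Fin (m + 1) → ℝ) × (((k : Fin m) × Fin (k.val + 1)) → ℝ) |
              r + 1 < m + 1 → i ≤ r →
              (entry (m + 1) p.1 p.2 (r + 1) i ≤ entry (m + 1) p.1 p.2 r i ∧
               entry (m + 1) p.1 p.2 r i ≤ entry (m + 1) p.1 p.2 (r + 1) (i + 1))}
              = {p : (Fin (m + 1) → ℝ) × (((k : Fin m) × Fin (k.val + 1)) → ℝ) |
                  entry (m + 1) p.1 p.2 (r + 1) i ≤ entry (m + 1) p.1 p.2 r i} ∩
                {p : (Fin (m + 1) → ℝ) × (((k : Fin m) × Fin (k.val + 1)) → ℝ) |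
                  entry (m + 1) p.1 p.2 r i ≤ entry (m + 1) p.1 p.2 (r + 1) (i + 1)} := by
            ext p; simp [h1, h2]
          rw [heq]
          exact (measurableSet_le (hent _ _) (hent _ _)).inter
            (measurableSet_le (hent _ _) (hent _ _))
        · have heq : {p : (Fin (m + 1) → ℝ) × (((k : Fin m) × Fin (k.val + 1)) → ℝ) |
              r + 1 < m + 1 → i ≤ r →
              (entry (m + 1) p.1 p.2 (r + 1) i ≤ entry (m + 1) p.1 p.2 r i ∧
               entry (m + 1) p.1 p.2 r i ≤ entry (m + 1) p.1 p.2 (r + 1) (i + 1))}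
              = Set.univ := by
            ext p
            simp only [Set.mem_setOf_eq, Set.mem_univ, iff_true]
            intro h1 h2
            exact absurd ⟨h1, h2⟩ h
          rw [heq]; exact MeasurableSet.univ
      -- the set equality
      have hset : GT (m + 1) lam = Φ ⁻¹' A := by
        ext x
        rw [Set.mem_preimage, hΦ x]
        show x ∈ GT (m + 1) lam ↔
          (topRow m x ∈ box ∧ lowRows m x ∈ GT m (topRow m x))
        simp only [GT, Set.mem_setOf_eq]
        constructor
        · intro hx
          constructor
          · rw [hboxdef]
            rw [Set.mem_univ_pi]
            intro j
            have hj := j.isLt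
            obtain ⟨h1, h2⟩ := hx m j.val (by omega) (by omega)
            rw [entry_big (m + 1 + 1) lam x (m + 1) j.val (by omega) (by omega),
              entry_small (m + 1 + 1) lam x m j.val (by omega) (by omega)] at h1
            rw [entry_big (m + 1 + 1) lam x (m + 1) (j.val + 1) (by omega) (by omega),
              entry_small (m + 1 + 1) lam x m j.val (by omega) (by omega)] at h2
            rw [Set.mem_Icc]
            constructor
            · convert h1 using 2 <;> rfl
            · convert h2 using 2 <;> rfl
          · intro r i hr hi
            have h := hx r i (by omega) hi
            rw [bridge m lam x (r + 1) i (by omega) (by omega),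
              bridge m lam x r i (by omega) (by omega),
              bridge m lam x (r + 1) (i + 1) (by omega) (by omega)]
            exact h
        · rintro ⟨hb, hg⟩ r i hr hi
          rw [hboxdef, Set.mem_univ_pi] at hb
          rcases Nat.lt_or_ge (r + 1) (m + 1) with h | h
          · have hgi := hg r i h hi
            rw [bridge m lam x (r + 1) i (by omega) (by omega),
              bridge m lam x r i (by omega) (by omega),
              bridge m lam x (r + 1) (i + 1) (by omega) (by omega)] at hgi
            exact hgi
          · have hrm : m = r := by omega
            subst hrm
            have hbi := hb ⟨i, by omega⟩
            rw [Set.mem_Icc] at hbi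
            obtain ⟨h1, h2⟩ := hbi
            rw [entry_big (m + 1 + 1) lam x (m + 1) i (by omega) (by omega),
              entry_big (m + 1 + 1) lam x (m + 1) (i + 1) (by omega) (by omega),
              entry_small (m + 1 + 1) lam x m i (by omega) (by omega)]
            constructor
            · convert h1 using 2 <;> rfl
            · convert h2 using 2 <;> rfl
      -- section computation
      have hsec : (fun μ : Fin (m + 1) → ℝ => volume (Prod.mk μ ⁻¹' A))
          = fun μ => box.indicator (fun ν => volume (GT m ν)) μ := by
        funext μ
        by_cases hμ : μ ∈ box
        · rw [Set.indicator_of_mem hμ]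
          congr 1
          ext y
          simp only [hAdef, Set.mem_preimage, Set.mem_setOf_eq]
          exact and_iff_right hμ
        · rw [Set.indicator_of_notMem hμ]
          have hpe : Prod.mk μ ⁻¹' A = ∅ := by
            ext y
            simp only [hAdef, Set.mem_preimage, Set.mem_setOf_eq, Set.mem_empty_iff_false,
              iff_false]
            intro hc
            exact hμ hc.1
          rw [hpe, measure_empty]
      set C : ℝ := ∏ k ∈ Finset.range (m + 1), (Nat.factorial k : ℝ) with hCdef
      have hCpos : 0 < C := Finset.prod_pos fun k _ => by positivity
      have hInt : IntegrableOn (fun μ : Fin (m + 1) → ℝ => vprod (m + 1) μ / C) box := by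
        rw [hboxdef]
        apply ContinuousOn.integrableOn_compact (isCompact_univ_pi fun j => isCompact_Icc)
        exact ((continuous_vprod (m + 1)).div_const C).continuousOn
      have hNN : 0 ≤ᵐ[volume.restrict box]
          fun μ : Fin (m + 1) → ℝ => vprod (m + 1) μ / C := by
        rw [hboxdef]
        refine (ae_restrict_iff' (MeasurableSet.univ_pi fun j => measurableSet_Icc)).2
          (Filter.Eventually.of_forall fun μ hμ => ?_)
        rw [Set.mem_univ_pi] at hμ
        exact div_nonneg (vprod_nonneg (mono_of_box hl hμ)) hCpos.le
      calc volume (GT (m + 1) lam) = volume (Φ ⁻¹' A) := by rw [hset]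
        _ = volume A := hΦmp.measure_preimage hAmeas.nullMeasurableSet
        _ = (volume.prod volume) A := by rw [← MeasureTheory.Measure.volume_eq_prod]
        _ = ∫⁻ μ, volume (Prod.mk μ ⁻¹' A) := Measure.prod_apply hAmeas
        _ = ∫⁻ μ, box.indicator (fun ν => volume (GT m ν)) μ := by rw [hsec]
        _ = ∫⁻ μ in box, volume (GT m μ) := lintegral_indicator hboxM _
        _ = ∫⁻ μ in box, ENNReal.ofReal (vprod (m + 1) μ / C) := by
            refine setLIntegral_congr_fun hboxM (fun μ hμ => ?_)
            have hμ' : ∀ j, μ j ∈ Set.Icc (lam j.castSucc) (lam j.succ) := by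
              rw [hboxdef, Set.mem_univ_pi] at hμ
              exact hμ
            exact IH μ (mono_of_box hl hμ')
        _ = ENNReal.ofReal (∫ μ in box, vprod (m + 1) μ / C) :=
            (MeasureTheory.ofReal_integral_eq_lintegral_ofReal hInt hNN).symm
        _ = ENNReal.ofReal (vprod (m + 2) lam /
              ∏ k ∈ Finset.range (m + 2), (Nat.factorial k : ℝ)) := by
            rw [integral_div]
            rw [hboxdef]
            rw [box_integral (m + 1) lam hl]
            congr 1
            rw [Finset.prod_range_succ, ← hCdef, div_div, mul_comm]




theorem gelfand_tsetlin_polytope_volume (n : ℕ) (hn : 1 ≤ n) (lam : Fin n → ℝ)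
    (hlam : StrictMono lam) :
    MeasureTheory.volume
        {x : ((k : Fin (n - 1)) × Fin (k.val + 1)) → ℝ |
          ∀ r i : ℕ, r + 1 < n → i ≤ r →
            entry n lam x (r + 1) i ≤ entry n lam x r i ∧
            entry n lam x r i ≤ entry n lam x (r + 1) (i + 1)}
      = ENNReal.ofReal ((∏ i : Fin n, ∏ j ∈ Finset.Ioi i, (lam j - lam i))
          / ∏ k ∈ Finset.range n, (Nat.factorial k : ℝ)) := by
  obtain ⟨m, rfl⟩ : ∃ m, n = m + 1 := ⟨n - 1, by omega⟩
  exact GT_vol m lam hlam.monotone
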